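/- Uniform localization of active sets: let K : ℓ² → H be bounded linear, f ∈ H, γ > 0, w_k ≥ w_0 > 0, and ū ∈ ℓ². Then there exist k₀ ∈ ℕ and ρ > 0 such that for all u ∈ ℓ² with ‖u - ū‖₂ < ρ, the active set A(u) = {k : |(u - γK*(Ku - f))_k| > γw_k} is contained in {1, …, k₀}. -/

import Mathlib

open scoped ENNReal

/-- `ℓ²`: square-summable real sequences. -/
noncomputable abbrev ellTwo := lp (fun _ : ℕ => ℝ) 2

set_option maxHeartbeats 1000000 in
/-- Uniform localization of active sets: there exist `k₀` and `ρ > 0` such that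
`‖u - ū‖₂ < ρ` implies `A(u) = {k : |(u - γK*(Ku - f))_k| > γ w_k} ⊆ {0, …, k₀}`. -/
theorem stmt_17 {H : Type*} [NormedAddCommGroup H] [InnerProductSpace ℝ H]
    [CompleteSpace H]
    (K : ellTwo →L[ℝ] H) (f : H) (γ : ℝ) (hγ : 0 < γ)
    (w : ℕ → ℝ) (w0 : ℝ) (hw0 : 0 < w0) (hw : ∀ k, w0 ≤ w k) (ubar : ellTwo) :
    ∃ k₀ : ℕ, ∃ ρ > (0 : ℝ), ∀ u : ellTwo, ‖u - ubar‖ < ρ →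
      ∀ k : ℕ, γ * w k <
          |u k - γ * (ContinuousLinearMap.adjoint K (K u - f)) k| → k ≤ k₀ := by
  set A := ContinuousLinearMap.adjoint K with hA
  set g : ellTwo → ellTwo := fun u => u - γ • A (K u - f) with hg
  -- coordinates of g ubar tend to 0
  have hmem : Memℓp (g ubar) 2 := lp.memℓp (g ubar)
  have hsum : Summable fun k => ‖g ubar k‖ ^ (2:ℝ) := by
    have := hmem.summable (p := 2) (by norm_num)
    simpa using this
  have hsum2 : Summable fun k => |g ubar k| ^ 2 := by
    convert hsum using 2 with k
    rw [Real.rpow_two]; rfl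
  have htend : Filter.Tendsto (fun k => |g ubar k| ^ 2) Filter.atTop (nhds 0) :=
    hsum2.tendsto_atTop_zero
  have hev : ∀ᶠ k in Filter.atTop, |g ubar k| ^ 2 < (γ * w0 / 2) ^ 2 :=
    htend.eventually (Filter.Tendsto.eventually_lt_const (by positivity) Filter.tendsto_id)
  obtain ⟨k₀, hk₀⟩ := Filter.eventually_atTop.mp hev
  set M : ℝ := 1 + γ * ‖K‖ ^ 2 with hM
  have hMpos : 0 < M := by positivity
  refine ⟨k₀, γ * w0 / (2 * M), by positivity, ?_⟩
  intro u hu k hk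
  by_contra hcon
  push_neg at hcon
  have h1 : |g ubar k| < γ * w0 / 2 := by
    have := hk₀ k hcon.le
    nlinarith [abs_nonneg (g ubar k), mul_pos hγ hw0]
  -- g u - g ubar
  have hdiff : g u - g ubar = (u - ubar) - γ • A (K (u - ubar)) := by
    simp only [hg, map_sub, smul_sub]
    abel
  have hnormA : ‖A‖ = ‖K‖ :=
    LinearIsometryEquiv.norm_map ContinuousLinearMap.adjoint K
  have h2 : ‖g u - g ubar‖ ≤ M * ‖u - ubar‖ := by
    rw [hdiff]
    calc ‖(u - ubar) - γ • A (K (u - ubar))‖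
        ≤ ‖u - ubar‖ + ‖γ • A (K (u - ubar))‖ := norm_sub_le _ _
      _ ≤ ‖u - ubar‖ + γ * (‖K‖ * (‖K‖ * ‖u - ubar‖)) := by
          gcongr
          rw [norm_smul, Real.norm_eq_abs, abs_of_pos hγ]
          gcongr
          calc ‖A (K (u - ubar))‖ ≤ ‖A‖ * ‖K (u - ubar)‖ := A.le_opNorm _
            _ ≤ ‖K‖ * (‖K‖ * ‖u - ubar‖) := by
                rw [hnormA]; gcongr; exact K.le_opNorm _
      _ = M * ‖u - ubar‖ := by ring
  have h3 : |(g u - g ubar) k| ≤ ‖g u - g ubar‖ := by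
    have := lp.norm_apply_le_norm (p := 2) (by norm_num) (g u - g ubar) k
    simpa using this
  have hcoe : ∀ v : ellTwo, g v k = v k - γ * (A (K v - f)) k := by
    intro v
    simp [hg, lp.coeFn_sub, lp.coeFn_smul, Pi.sub_apply, Pi.smul_apply, smul_eq_mul]
    rfl
  have hguk : |g u k| > γ * w k := by
    rw [hcoe u]; exact hk
  have hsub : (g u - g ubar) k = g u k - g ubar k := by
    simp [lp.coeFn_sub]
  have hw0k : γ * w0 ≤ γ * w k := by gcongr; exact hw k
  have hρ : ‖u - ubar‖ < γ * w0 / (2 * M) := hu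
  have : ‖g u - g ubar‖ < γ * w0 / 2 := by
    calc ‖g u - g ubar‖ ≤ M * ‖u - ubar‖ := h2
      _ < M * (γ * w0 / (2 * M)) := mul_lt_mul_of_pos_left hρ hMpos
      _ = γ * w0 / 2 := by field_simp
  have habs : |g u k| ≤ |g u k - g ubar k| + |g ubar k| := by
    have := abs_sub_abs_le_abs_sub (g u k) (g ubar k)
    linarith [abs_sub_abs_le_abs_sub (g u k) (g ubar k)]
  rw [hsub] at h3
  linarith [hguk, habs, h1, h3, hw0k, this]
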